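/- Let 0 ≤ i ≤ n, let j satisfy n − n/(log n)³ ≤ j ≤ n with i = o(n) and i > n/(log n)², and let r ∈ [0,1] satisfy r ≤ max{1/2, 1−h} for a constant h ∈ (0,1). Then for sufficiently large n, ∑_{k=0}^{min(i,n−j)} C(n−i, j−i+k)·C(i,k)·r^{j−i+2k}·(1−r)^{n−(j−i+2k)} ≤ n^{n−j}·(max{1/2, 1−h})^{j−i}, and this bound is super-polynomially small in n (i.e., smaller than n^{−c} for every constant c for all sufficiently large n). -/

import Mathlib

open Filter Asymptotics Finset

lemma vand_partial (n i j : ℕ) (hij : i ≤ j) (hjn : j ≤ n) :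
    ∑ k ∈ Finset.range (min i (n - j) + 1), (n - i).choose (j - i + k) * i.choose k
      ≤ n.choose j := by
  have h1 : ∑ k ∈ Finset.range (min i (n - j) + 1), (n - i).choose (j - i + k) * i.choose k
      = ∑ p ∈ (Finset.range (min i (n - j) + 1)).image (fun k => (j - i + k, i - k)),
          (n - i).choose p.1 * i.choose p.2 := by
    rw [Finset.sum_image]
    · apply Finset.sum_congr rfl
      intro k hk
      simp only [Finset.mem_range] at hk
      have hki : k ≤ i := by omega
      rw [Nat.choose_symm hki]
    · intro a _ b _ hab
      have := congrArg Prod.fst hab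
      simp at this
      omega
  rw [h1]
  have h2 : n.choose j = ∑ p ∈ Finset.HasAntidiagonal.antidiagonal j,
      (n - i).choose p.1 * i.choose p.2 := by
    have := Nat.add_choose_eq (n - i) i j
    rwa [Nat.sub_add_cancel (le_trans hij hjn)] at this
  rw [h2]
  apply Finset.sum_le_sum_of_subset
  intro p hp
  simp only [Finset.mem_image, Finset.mem_range] at hp
  obtain ⟨k, hk, rfl⟩ := hp
  simp only [Finset.HasAntidiagonal.mem_antidiagonal]
  omega

/-- with `i = i(n) = o(n)`, `i(n) > n/(log n)²`,
`n − n/(log n)³ ≤ j(n) ≤ n` and flip rate `r(n) ≤ max{1/2, 1−h}` for a constant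
`h ∈ (0,1)`, the transition probability from `i` to exactly `j` matching bits
is eventually at most `n^{n−j}·(max{1/2, 1−h})^{j−i}`, a bound which is
super-polynomially small in `n`. -/
theorem transition_to_forbidden_superpoly_small (h : ℝ) (hh0 : 0 < h) (hh1 : h < 1)
    (i j : ℕ → ℕ) (r : ℕ → ℝ)
    (hij : ∀ n, i n ≤ j n) (hjn : ∀ n, j n ≤ n)
    (hjlb : ∀ᶠ n : ℕ in atTop, (n : ℝ) - (n : ℝ) / (Real.log n) ^ 3 ≤ (j n : ℝ))
    (hio : (fun n : ℕ => (i n : ℝ)) =o[atTop] (fun n : ℕ => (n : ℝ)))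
    (hilb : ∀ᶠ n : ℕ in atTop, (n : ℝ) / (Real.log n) ^ 2 < (i n : ℝ))
    (hr0 : ∀ n, 0 ≤ r n) (hr1 : ∀ n, r n ≤ 1)
    (hrmax : ∀ n, r n ≤ max (1 / 2) (1 - h)) :
    (∀ᶠ n : ℕ in atTop,
        ∑ k ∈ Finset.range (min (i n) (n - j n) + 1),
            ((n - i n).choose (j n - i n + k) : ℝ) * ((i n).choose k : ℝ) *
              (r n) ^ (j n - i n + 2 * k) * (1 - r n) ^ (n - (j n - i n + 2 * k))
          ≤ (n : ℝ) ^ (n - j n) * (max (1 / 2) (1 - h)) ^ (j n - i n)) ∧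
    ∀ c : ℝ, ∀ᶠ n : ℕ in atTop,
      (n : ℝ) ^ (n - j n) * (max (1 / 2) (1 - h)) ^ (j n - i n) < (n : ℝ) ^ (-c) := by
  set M : ℝ := max (1 / 2) (1 - h) with hM
  have hM2 : (1:ℝ)/2 ≤ M := le_max_left _ _
  have hM0 : (0:ℝ) < M := by linarith
  have hM1 : M < 1 := max_lt (by norm_num) (by linarith)
  have hm : Real.log M < 0 := Real.log_neg hM0 hM1
  clear_value M
  constructor
  · apply Filter.Eventually.of_forall
    intro n
    calc ∑ k ∈ Finset.range (min (i n) (n - j n) + 1),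
            ((n - i n).choose (j n - i n + k) : ℝ) * ((i n).choose k : ℝ) *
              (r n) ^ (j n - i n + 2 * k) * (1 - r n) ^ (n - (j n - i n + 2 * k))
        ≤ ∑ k ∈ Finset.range (min (i n) (n - j n) + 1),
            ((n - i n).choose (j n - i n + k) : ℝ) * ((i n).choose k : ℝ) * M ^ (j n - i n) := by
          apply Finset.sum_le_sum
          intro k _
          have hpow1 : (r n) ^ (j n - i n + 2 * k) ≤ M ^ (j n - i n) := by
            calc (r n) ^ (j n - i n + 2 * k) ≤ M ^ (j n - i n + 2 * k) :=
                  pow_le_pow_left₀ (hr0 n) (hrmax n) _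
              _ ≤ M ^ (j n - i n) :=
                  pow_le_pow_of_le_one hM0.le hM1.le (by omega)
          have hpow2 : (1 - r n) ^ (n - (j n - i n + 2 * k)) ≤ 1 :=
            pow_le_one₀ (by linarith [hr1 n]) (by linarith [hr0 n])
          have hc1 : (0:ℝ) ≤ ((n - i n).choose (j n - i n + k) : ℝ) := Nat.cast_nonneg _
          have hc2 : (0:ℝ) ≤ ((i n).choose k : ℝ) := Nat.cast_nonneg _
          have hr2 : (0:ℝ) ≤ (r n) ^ (j n - i n + 2 * k) := pow_nonneg (hr0 n) _
          have hr3 : (0:ℝ) ≤ (1 - r n) ^ (n - (j n - i n + 2 * k)) :=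
            pow_nonneg (by linarith [hr1 n]) _
          calc ((n - i n).choose (j n - i n + k) : ℝ) * ((i n).choose k : ℝ) *
                (r n) ^ (j n - i n + 2 * k) * (1 - r n) ^ (n - (j n - i n + 2 * k))
              ≤ ((n - i n).choose (j n - i n + k) : ℝ) * ((i n).choose k : ℝ) *
                (r n) ^ (j n - i n + 2 * k) * 1 := by
                apply mul_le_mul_of_nonneg_left hpow2 (by positivity)
            _ = ((n - i n).choose (j n - i n + k) : ℝ) * ((i n).choose k : ℝ) *
                (r n) ^ (j n - i n + 2 * k) := by ring
            _ ≤ ((n - i n).choose (j n - i n + k) : ℝ) * ((i n).choose k : ℝ) *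
                M ^ (j n - i n) := mul_le_mul_of_nonneg_left hpow1 (by positivity)
      _ = (↑(∑ k ∈ Finset.range (min (i n) (n - j n) + 1),
            (n - i n).choose (j n - i n + k) * (i n).choose k) : ℝ) * M ^ (j n - i n) := by
          rw [← Finset.sum_mul]
          push_cast
          ring
      _ ≤ (n.choose (j n) : ℝ) * M ^ (j n - i n) := by
          apply mul_le_mul_of_nonneg_right _ (by positivity)
          exact_mod_cast vand_partial n (i n) (j n) (hij n) (hjn n)
      _ ≤ (n : ℝ) ^ (n - j n) * M ^ (j n - i n) := by
          apply mul_le_mul_of_nonneg_right _ (by positivity)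
          have : n.choose (j n) = n.choose (n - j n) := (Nat.choose_symm (hjn n)).symm
          rw [this]
          exact_mod_cast Nat.choose_le_pow n (n - j n)
  · intro c
    set m : ℝ := -Real.log M with hmdef
    have hm0 : 0 < m := by simp [hmdef]; linarith
    have hlogM : Real.log M = -m := by simp [hmdef]
    clear_value m
    have hε : (0:ℝ) < m / (4 * (|c| + 1)) := by positivity
    have hDr : ∀ᶠ x : ℝ in atTop, ‖Real.log x‖ ≤ m / (4 * (|c| + 1)) * ‖id x‖ :=
      Real.isLittleO_log_id_atTop.bound hε
    have hDn : ∀ᶠ n : ℕ in atTop,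
        ‖Real.log (n:ℝ)‖ ≤ m / (4 * (|c| + 1)) * ‖id (n:ℝ)‖ :=
      tendsto_natCast_atTop_atTop.eventually hDr
    have hCn : ∀ᶠ n : ℕ in atTop, 2 + 4 / m ≤ Real.log (n:ℝ) :=
      (Real.tendsto_log_atTop.comp tendsto_natCast_atTop_atTop).eventually_ge_atTop _
    have hBn : ∀ᶠ n : ℕ in atTop, (i n : ℝ) ≤ 1/4 * (n:ℝ) := by
      filter_upwards [hio.bound (by norm_num : (0:ℝ) < 1/4)] with n hn
      simpa [abs_of_nonneg] using hn
    filter_upwards [hjlb, hBn, hCn, hDn, Filter.eventually_ge_atTop 1] with n hA hB hC hD hn1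
    clear hio hilb hjlb hBn hCn hDn hDr hrmax hr0 hr1 hε
    set L : ℝ := Real.log (n:ℝ) with hL
    clear_value L
    have hnn : (1:ℝ) ≤ (n:ℝ) := by exact_mod_cast hn1
    have hn0 : (0:ℝ) < (n:ℝ) := by linarith
    have hL2 : 2 ≤ L := by
      have : 0 < 4 / m := by positivity
      linarith
    have hL0 : 0 < L := by linarith
    have hLm : 4 / m ≤ L := by linarith
    -- cast facts
    have hcast1 : ((n - j n : ℕ) : ℝ) = (n:ℝ) - (j n : ℝ) := by
      rw [Nat.cast_sub (hjn n)]
    have hcast2 : ((j n - i n : ℕ) : ℝ) = (j n:ℝ) - (i n : ℝ) := by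
      rw [Nat.cast_sub (hij n)]
    -- rewrite powers as exponentials
    have e1 : (n : ℝ) ^ (n - j n) = Real.exp (((n - j n : ℕ):ℝ) * L) := by
      rw [← Real.rpow_natCast (n:ℝ) (n - j n), Real.rpow_def_of_pos hn0, mul_comm, ← hL]
    have e2 : M ^ (j n - i n) = Real.exp (((j n - i n : ℕ):ℝ) * Real.log M) := by
      rw [← Real.rpow_natCast M (j n - i n), Real.rpow_def_of_pos hM0, mul_comm]
    have e3 : (n : ℝ) ^ (-c : ℝ) = Real.exp ((-c) * L) := by
      rw [Real.rpow_def_of_pos hn0, mul_comm, ← hL]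
    rw [e1, e2, e3, ← Real.exp_add, Real.exp_lt_exp]
    rw [hcast1, hcast2]
    -- key inequalities
    have k1 : (n:ℝ) - (j n : ℝ) ≤ (n:ℝ) / L ^ 3 := by linarith [hA]
    have k2 : (n:ℝ) / 2 ≤ (j n : ℝ) - (i n : ℝ) := by
      have h8 : (8:ℝ) ≤ L ^ 3 := by nlinarith [sq_nonneg (L + 1), hL2, hL0]
      have : (n:ℝ) / L ^ 3 ≤ (n:ℝ) / 8 := by
        apply div_le_div_of_nonneg_left (by linarith) (by norm_num) h8
      linarith [hA, hB]
    have k3 : ((n:ℝ) - (j n:ℝ)) * L ≤ (n:ℝ) / L ^ 2 := by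
      have : ((n:ℝ) - (j n:ℝ)) * L ≤ ((n:ℝ) / L ^ 3) * L :=
        mul_le_mul_of_nonneg_right k1 hL0.le
      calc ((n:ℝ) - (j n:ℝ)) * L ≤ ((n:ℝ) / L ^ 3) * L := this
        _ = (n:ℝ) / L ^ 2 := by field_simp
    have k4 : (n:ℝ) / L ^ 2 ≤ (n:ℝ) * m / 4 := by
      have hLm' : 4 ≤ L * m := by rwa [div_le_iff₀ hm0] at hLm
      rw [div_le_div_iff₀ (by positivity : (0:ℝ) < L ^ 2) (by norm_num : (0:ℝ) < 4)]
      have h4 : (4:ℝ) ≤ m * L ^ 2 := by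
        have h5 := mul_le_mul_of_nonneg_right hLm' hL0.le
        linarith only [h5, hL2]
      have h6 := mul_le_mul_of_nonneg_left h4 (le_of_lt hn0)
      linarith only [h6]
    have k5 : ((j n:ℝ) - (i n:ℝ)) * Real.log M ≤ ((n:ℝ)/2) * Real.log M := by
      rw [hlogM]
      linarith only [mul_le_mul_of_nonneg_right k2 hm0.le]
    have k6 : c * L < (n:ℝ) * m / 4 := by
      have hnabs : ‖id (n:ℝ)‖ = (n:ℝ) := by
        simp [abs_of_pos hn0]
      rw [hnabs] at hD
      replace hD : L ≤ m / (4 * (|c| + 1)) * (n:ℝ) := (le_abs_self L).trans hD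
      have h1 : c * L ≤ |c| * L :=
        mul_le_mul_of_nonneg_right (le_abs_self c) hL0.le
      have h2 : |c| * L ≤ |c| * (m / (4 * (|c| + 1)) * (n:ℝ)) :=
        mul_le_mul_of_nonneg_left hD (abs_nonneg c)
      have h3 : |c| * (m / (4 * (|c| + 1)) * (n:ℝ)) < (n:ℝ) * m / 4 := by
        have heq : |c| * (m / (4 * (|c| + 1)) * (n:ℝ))
            = (|c| / (|c| + 1)) * ((n:ℝ) * m / 4) := by
          have hc0 : (0:ℝ) < |c| + 1 := by positivity
          field_simp
        have hfrac : |c| / (|c| + 1) < 1 := by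
          rw [div_lt_one (by positivity)]
          linarith [abs_nonneg c]
        have hpos : (0:ℝ) < (n:ℝ) * m / 4 := by positivity
        calc |c| * (m / (4 * (|c| + 1)) * (n:ℝ))
            = (|c| / (|c| + 1)) * ((n:ℝ) * m / 4) := heq
          _ < 1 * ((n:ℝ) * m / 4) := mul_lt_mul_of_pos_right hfrac hpos
          _ = (n:ℝ) * m / 4 := one_mul _
      linarith
    rw [hlogM] at k5 ⊢
    linarith only [k3, k4, k5, k6]
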